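/- Asymptotically, r·Re(ω̃(k))/|k| tends to 1 as |k| → ∞; i.e., the sequence (r·Re(ω̃(k))/k) for positive integers k tends to 1 as k → +∞, and by the symmetry ω̃(−k) = ω̃(k) the same limit holds as k → −∞ with |k| in the denominator. (This is the same asymptotic behaviour as for the free massive scalar field on Minkowski space.) -/

import Mathlib

open Complex Filter Finset

lemma tele_bound (c : ℝ) (hc : 3 ≤ c) (m : ℕ) :
    ∑ j ∈ Finset.range m, (1:ℝ)/(c+2*j)^2 ≤ 1/(2*(c-2)) := by
  have key : ∀ m : ℕ, ∑ j ∈ Finset.range m, (1:ℝ)/(c+2*j)^2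
      ≤ 1/(2*(c-2)) - 1/(2*(c+2*m-2)) := by
    intro m
    induction m with
    | zero => simp
    | succ n ih =>
      rw [Finset.sum_range_succ]
      have h1 : (0:ℝ) < c + 2*n - 2 := by
        have : (0:ℝ) ≤ (n:ℝ) := Nat.cast_nonneg n
        nlinarith
      have h2 : (0:ℝ) < c + 2*n := by linarith
      have h3 : (1:ℝ)/(c+2*n)^2 ≤ 1/(2*(c+2*n-2)) - 1/(2*(c+2*n)) := by
        rw [div_sub_div _ _ (by positivity) (by positivity), div_le_div_iff₀ (by positivity) (by positivity)]
        ring_nf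
        nlinarith
      have h4 : c + 2*(n+1:ℕ) - 2 = c + 2*n := by push_cast; ring
      rw [h4]
      linarith
  have h5 : (0:ℝ) < c + 2*m - 2 := by
    have : (0:ℝ) ≤ (m:ℝ) := Nat.cast_nonneg m
    nlinarith
  have := key m
  have h6 : 0 < 1/(2*(c+2*m-2)) := by positivity
  linarith

lemma prod_sub_one_norm_le (w : ℕ → ℂ) (t : ℕ → ℝ) (ht : ∀ j, 0 ≤ t j) :
    ∀ m : ℕ, (∀ j < m, ‖w j - 1‖ ≤ t j) →
      ‖(∏ j ∈ Finset.range m, w j) - 1‖ ≤ Real.exp (∑ j ∈ Finset.range m, t j) - 1 := by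
  intro m
  induction m with
  | zero => simp
  | succ n ih =>
    intro h
    have hb : ∀ j < n, ‖w j - 1‖ ≤ t j := fun j hj => h j (by omega)
    have ihn := ih hb
    rw [Finset.prod_range_succ, Finset.sum_range_succ]
    have hwn : ‖w n - 1‖ ≤ t n := h n (by omega)
    have key : (∏ j ∈ Finset.range n, w j) * w n - 1
        = ((∏ j ∈ Finset.range n, w j) - 1) * w n + (w n - 1) := by ring
    rw [key]
    have h1 : ‖w n‖ ≤ 1 + t n := by
      calc ‖w n‖ = ‖(w n - 1) + 1‖ := by ring_nf
      _ ≤ ‖w n - 1‖ + 1 := by simpa using norm_add_le (w n - 1) 1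
      _ ≤ 1 + t n := by linarith
    have hS : 0 ≤ ∑ j ∈ Finset.range n, t j := Finset.sum_nonneg fun j _ => ht j
    calc ‖((∏ j ∈ Finset.range n, w j) - 1) * w n + (w n - 1)‖
        ≤ ‖(∏ j ∈ Finset.range n, w j) - 1‖ * ‖w n‖ + ‖w n - 1‖ := by
          refine le_trans (norm_add_le _ _) ?_; rw [norm_mul]
      _ ≤ (Real.exp (∑ j ∈ Finset.range n, t j) - 1) * (1 + t n) + t n := by
          have := Real.one_le_exp hS
          have h0 : 0 ≤ ‖w n‖ := norm_nonneg _
          nlinarith [norm_nonneg ((∏ j ∈ Finset.range n, w j) - 1)]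
      _ ≤ Real.exp ((∑ j ∈ Finset.range n, t j) + t n) - 1 := by
          rw [Real.exp_add]
          nlinarith [Real.exp_pos (∑ j ∈ Finset.range n, t j), Real.one_le_exp hS,
            Real.add_one_le_exp (t n)]

lemma aux_div (a₁ a₂ a₃ a₄ F P₁ P₂ P₃ P₄ : ℂ) (hpow : a₁*a₂ = a₃*a₄) (hF : F ≠ 0)
    (h1 : P₁ ≠ 0) (h2 : P₂ ≠ 0) (h3 : P₃ ≠ 0) (h4 : P₄ ≠ 0) (ha3 : a₃ ≠ 0) (ha4 : a₄ ≠ 0) :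
    (a₁*F/P₁)*(a₂*F/P₂)/((a₃*F/P₃)*(a₄*F/P₄)) = P₃*P₄/(P₁*P₂) := by
  field_simp
  linear_combination hpow

lemma G_tendsto (s : ℂ) (h1 : -(1/2:ℝ) ≤ s.re) (h2 : s.re < 0) :
    Filter.Tendsto (fun k : ℕ => Complex.Gamma (((k:ℂ)+s)/2) * Complex.Gamma (((k:ℂ)+1-s)/2) /
      (Complex.Gamma (((k:ℂ)-s)/2) * Complex.Gamma (((k:ℂ)+1+s)/2))) Filter.atTop (nhds 1) := by
  set c₀ : ℝ := ‖s‖ + ‖s‖^2 with hc₀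
  have hc₀0 : 0 ≤ c₀ := by positivity
  have main : ∀ k : ℕ, 2*c₀ + 3 ≤ (k:ℝ) →
      ‖(Complex.Gamma (((k:ℂ)+s)/2) * Complex.Gamma (((k:ℂ)+1-s)/2) /
      (Complex.Gamma (((k:ℂ)-s)/2) * Complex.Gamma (((k:ℂ)+1+s)/2))) - 1‖
      ≤ Real.exp (2*‖s‖/((k:ℝ)-2)) - 1 := by
    intro k hk
    have hk3 : (3:ℝ) ≤ (k:ℝ) := by linarith
    set z₁ : ℂ := ((k:ℂ)+s)/2 with hz₁
    set z₂ : ℂ := ((k:ℂ)+1-s)/2 with hz₂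
    set z₃ : ℂ := ((k:ℂ)-s)/2 with hz₃
    set z₄ : ℂ := ((k:ℂ)+1+s)/2 with hz₄
    have hre1 : 0 < z₁.re := by simp [hz₁, Complex.div_re, Complex.add_re]; linarith
    have hre2 : 0 < z₂.re := by simp [hz₂, Complex.div_re, Complex.add_re, Complex.sub_re]; linarith
    have hre3 : 0 < z₃.re := by simp [hz₃, Complex.div_re, Complex.sub_re]; linarith
    have hre4 : 0 < z₄.re := by simp [hz₄, Complex.div_re, Complex.add_re]; linarith
    have hzne : ∀ (z:ℂ), 0 < z.re → ∀ j:ℕ, z + (j:ℂ) ≠ 0 := by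
      intro z hz j h
      have : (z + (j:ℂ)).re = z.re + j := by simp
      rw [h] at this
      simp at this
      have : (0:ℝ) ≤ (j:ℝ) := Nat.cast_nonneg j
      linarith [hz, this]
    have hG3 : Complex.Gamma z₃ ≠ 0 := Complex.Gamma_ne_zero_of_re_pos hre3
    have hG4 : Complex.Gamma z₄ ≠ 0 := Complex.Gamma_ne_zero_of_re_pos hre4
    -- limit of GammaSeq quotients
    have hQ : Filter.Tendsto (fun n => Complex.GammaSeq z₁ n * Complex.GammaSeq z₂ n /
        (Complex.GammaSeq z₃ n * Complex.GammaSeq z₄ n)) Filter.atTop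
        (nhds (Complex.Gamma z₁ * Complex.Gamma z₂ / (Complex.Gamma z₃ * Complex.Gamma z₄))) :=
      ((Complex.GammaSeq_tendsto_Gamma z₁).mul (Complex.GammaSeq_tendsto_Gamma z₂)).div
        ((Complex.GammaSeq_tendsto_Gamma z₃).mul (Complex.GammaSeq_tendsto_Gamma z₄))
        (mul_ne_zero hG3 hG4)
    -- partial product formula
    have hQeq : ∀ n:ℕ, 1 ≤ n → Complex.GammaSeq z₁ n * Complex.GammaSeq z₂ n /
        (Complex.GammaSeq z₃ n * Complex.GammaSeq z₄ n) =
        ∏ j ∈ Finset.range (n+1), ((z₃+(j:ℂ))*(z₄+(j:ℂ))/((z₁+(j:ℂ))*(z₂+(j:ℂ)))) := by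
      intro n hn
      have hn0 : (n:ℂ) ≠ 0 := Nat.cast_ne_zero.2 (by omega)
      have hfac : ((n.factorial : ℕ) : ℂ) ≠ 0 := Nat.cast_ne_zero.2 (Nat.factorial_ne_zero n)
      have hP1 : (∏ j ∈ Finset.range (n+1), (z₁+(j:ℂ))) ≠ 0 :=
        Finset.prod_ne_zero_iff.2 fun j _ => hzne z₁ hre1 j
      have hP2 : (∏ j ∈ Finset.range (n+1), (z₂+(j:ℂ))) ≠ 0 :=
        Finset.prod_ne_zero_iff.2 fun j _ => hzne z₂ hre2 j
      have hP3 : (∏ j ∈ Finset.range (n+1), (z₃+(j:ℂ))) ≠ 0 :=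
        Finset.prod_ne_zero_iff.2 fun j _ => hzne z₃ hre3 j
      have hP4 : (∏ j ∈ Finset.range (n+1), (z₄+(j:ℂ))) ≠ 0 :=
        Finset.prod_ne_zero_iff.2 fun j _ => hzne z₄ hre4 j
      have hpow : (n:ℂ)^z₁ * (n:ℂ)^z₂ = (n:ℂ)^z₃ * (n:ℂ)^z₄ := by
        rw [← Complex.cpow_add _ _ hn0, ← Complex.cpow_add _ _ hn0]
        congr 1
        rw [hz₁, hz₂, hz₃, hz₄]; ring
      have hgs : ∀ z : ℂ, Complex.GammaSeq z n
          = (n:ℂ) ^ z * ((n.factorial : ℕ) : ℂ) / ∏ j ∈ Finset.range (n+1), (z + (j:ℂ)) := fun z => rfl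
      rw [hgs z₁, hgs z₂, hgs z₃, hgs z₄, Finset.prod_div_distrib, Finset.prod_mul_distrib,
        Finset.prod_mul_distrib]
      have hpw : ∀ z : ℂ, (n:ℂ)^z ≠ 0 := fun z h => hn0 ((Complex.cpow_eq_zero_iff _ _).1 h).1
      exact aux_div _ _ _ _ _ _ _ _ _ hpow hfac hP1 hP2 hP3 hP4 (hpw z₃) (hpw z₄)
    -- bound on each factor
    have hfactor : ∀ j : ℕ, ‖(z₃+(j:ℂ))*(z₄+(j:ℂ))/((z₁+(j:ℂ))*(z₂+(j:ℂ))) - 1‖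
        ≤ 4*‖s‖/((k:ℝ)+2*j)^2 := by
      intro j
      set x : ℝ := (k:ℝ)+2*j with hx
      have hj0 : (0:ℝ) ≤ (j:ℝ) := Nat.cast_nonneg j
      have hx3 : 3 ≤ x := by rw [hx]; linarith
      have hxk : 2*c₀ + 3 ≤ x := by rw [hx]; linarith
      have haj_ne : (z₁+(j:ℂ))*(z₂+(j:ℂ)) ≠ 0 := mul_ne_zero (hzne _ hre1 j) (hzne _ hre2 j)
      have hid : (z₃+(j:ℂ))*(z₄+(j:ℂ)) = (z₁+(j:ℂ))*(z₂+(j:ℂ)) - s/2 := by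
        rw [hz₁, hz₂, hz₃, hz₄]; ring
      have hdiff : (z₃+(j:ℂ))*(z₄+(j:ℂ))/((z₁+(j:ℂ))*(z₂+(j:ℂ))) - 1
          = (-(s/2))/((z₁+(j:ℂ))*(z₂+(j:ℂ))) := by
        rw [hid, sub_div, div_self haj_ne]; ring
      have hval : (z₁+(j:ℂ))*(z₂+(j:ℂ)) = ((4⁻¹:ℝ):ℂ) * ((((x^2+x:ℝ)):ℂ) + (s - s^2)) := by
        rw [hz₁, hz₂, hx]; push_cast; ring
      have hre_a : ((z₁+(j:ℂ))*(z₂+(j:ℂ))).re = 4⁻¹ * ((x^2+x) + (s - s^2).re) := by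
        rw [hval, Complex.re_ofReal_mul, Complex.add_re, Complex.ofReal_re]
      have habs : |(s - s^2).re| ≤ c₀ := by
        refine le_trans (Complex.abs_re_le_norm _) ?_
        refine le_trans (norm_sub_le _ _) ?_
        rw [hc₀, norm_pow]
      have hre_lb : x^2/8 ≤ ((z₁+(j:ℂ))*(z₂+(j:ℂ))).re := by
        rw [hre_a]
        have h := abs_le.1 habs
        nlinarith
      have hnorm_a : x^2/8 ≤ ‖(z₁+(j:ℂ))*(z₂+(j:ℂ))‖ := by
        refine le_trans hre_lb ?_
        exact Complex.re_le_norm _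
      have hx2pos : (0:ℝ) < x^2/8 := by positivity
      rw [hdiff, norm_div, norm_neg]
      have h2 : ‖s/2‖ = ‖s‖/2 := by
        rw [norm_div]; norm_num
      rw [h2]
      calc ‖s‖/2 / ‖(z₁+(j:ℂ))*(z₂+(j:ℂ))‖ ≤ ‖s‖/2 / (x^2/8) := by
            apply div_le_div_of_nonneg_left _ hx2pos hnorm_a
            positivity
        _ = 4*‖s‖/x^2 := by field_simp; ring
    -- bound on partial products
    have hbnd : ∀ n:ℕ, ‖(∏ j ∈ Finset.range (n+1),
        ((z₃+(j:ℂ))*(z₄+(j:ℂ))/((z₁+(j:ℂ))*(z₂+(j:ℂ))))) - 1‖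
        ≤ Real.exp (2*‖s‖/((k:ℝ)-2)) - 1 := by
      intro n
      have ht : ∀ j:ℕ, 0 ≤ 4*‖s‖/((k:ℝ)+2*j)^2 := by
        intro j; positivity
      refine le_trans (prod_sub_one_norm_le _ _ ht (n+1) (fun j _ => hfactor j)) ?_
      have hsum : ∑ j ∈ Finset.range (n+1), 4*‖s‖/((k:ℝ)+2*j)^2 ≤ 2*‖s‖/((k:ℝ)-2) := by
        have : ∀ j:ℕ, 4*‖s‖/((k:ℝ)+2*j)^2 = (4*‖s‖) * (1/((k:ℝ)+2*j)^2) := by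
          intro j; ring
        simp_rw [this, ← Finset.mul_sum]
        have := tele_bound ((k:ℝ)) hk3 (n+1)
        calc (4*‖s‖) * ∑ j ∈ Finset.range (n+1), (1:ℝ)/((k:ℝ)+2*j)^2
            ≤ (4*‖s‖) * (1/(2*((k:ℝ)-2))) := by
              apply mul_le_mul_of_nonneg_left this (by positivity)
          _ = 2*‖s‖/((k:ℝ)-2) := by
              have : (k:ℝ) - 2 ≠ 0 := by linarith
              field_simp; ring
      exact sub_le_sub_right (Real.exp_le_exp.2 hsum) 1
    -- pass to the limit
    refine le_of_tendsto ((hQ.sub tendsto_const_nhds).norm) ?_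
    filter_upwards [eventually_ge_atTop 1] with n hn
    rw [hQeq n hn]
    exact hbnd n
  -- conclude
  obtain ⟨N, hN⟩ := exists_nat_ge (2*c₀+3)
  rw [tendsto_iff_dist_tendsto_zero]
  refine squeeze_zero' (g := fun k:ℕ => Real.exp (2*‖s‖/((k:ℝ)-2)) - 1)
    (Filter.Eventually.of_forall (fun k => dist_nonneg)) ?_ ?_
  · filter_upwards [eventually_ge_atTop N] with k hk
    rw [dist_eq_norm]
    exact main k (le_trans hN (Nat.cast_le.2 hk))
  · have hh1 : Filter.Tendsto (fun k:ℕ => (k:ℝ) - 2) Filter.atTop Filter.atTop := by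
      exact (tendsto_atTop_add_const_right Filter.atTop (-2:ℝ) tendsto_natCast_atTop_atTop).congr (fun k => by ring)
    have hh2 : Filter.Tendsto (fun k:ℕ => 2*‖s‖/((k:ℝ)-2)) Filter.atTop (nhds 0) :=
      Filter.Tendsto.div_atTop tendsto_const_nhds hh1
    have hh3 := (Real.continuous_exp.tendsto 0).comp hh2
    rw [Real.exp_zero] at hh3
    simpa [Function.comp] using hh3.sub (tendsto_const_nhds (x := (1:ℝ)))


lemma s_ne_int (s : ℂ) (h1 : -(1/2:ℝ) ≤ s.re) (h2 : s.re < 0) (m : ℤ) : s ≠ (m:ℂ) := by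
  intro h
  have hre : s.re = (m:ℝ) := by rw [h]; simp
  rcases le_or_gt 0 m with hm | hm
  · have : (0:ℝ) ≤ (m:ℝ) := by exact_mod_cast hm
    linarith [h2, hre ▸ this]
  · have hm1 : m ≤ -1 := by omega
    have : (m:ℝ) ≤ -1 := by exact_mod_cast hm1
    rw [hre] at h1 h2
    linarith

lemma Gamma_p_ne (s : ℂ) (h1 : -(1/2:ℝ) ≤ s.re) (h2 : s.re < 0) (m : ℤ) (z : ℂ)
    (hz : z = ((m:ℂ)+s)/2) : Complex.Gamma z ≠ 0 := by
  apply Complex.Gamma_ne_zero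
  intro n hn
  apply s_ne_int s h1 h2 (-m - 2*n)
  rw [hz] at hn
  push_cast
  linear_combination 2*hn

lemma Gamma_m_ne (s : ℂ) (h1 : -(1/2:ℝ) ≤ s.re) (h2 : s.re < 0) (m : ℤ) (z : ℂ)
    (hz : z = ((m:ℂ)-s)/2) : Complex.Gamma z ≠ 0 := by
  apply Complex.Gamma_ne_zero
  intro n hn
  apply s_ne_int s h1 h2 (m + 2*n)
  rw [hz] at hn
  push_cast
  linear_combination -2*hn

lemma sin_ne (s : ℂ) (h1 : -(1/2:ℝ) ≤ s.re) (h2 : s.re < 0) (m : ℤ) (z : ℂ)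
    (hz : 2*z = (m:ℂ) + s ∨ 2*z = (m:ℂ) - s) :
    Complex.sin ((Real.pi:ℂ) * z) ≠ 0 := by
  intro h
  rw [Complex.sin_eq_zero_iff] at h
  obtain ⟨n, hn⟩ := h
  have hpi : (Real.pi:ℂ) ≠ 0 := Complex.ofReal_ne_zero.2 Real.pi_ne_zero
  have hzn : z = (n:ℂ) := by
    apply mul_left_cancel₀ hpi
    rw [hn]; ring
  rcases hz with hz | hz
  · apply s_ne_int s h1 h2 (2*n - m)
    push_cast
    rw [hzn] at hz
    linear_combination -hz
  · apply s_ne_int s h1 h2 (m - 2*n)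
    push_cast
    rw [hzn] at hz
    linear_combination hz

lemma aux_sym (u w g1 g2 g3 g4 sA sB c p : ℂ)
    (hc : c^2 = 1) (hp : p ≠ 0) (hsA : sA ≠ 0) (hsB : sB ≠ 0) (hg1 : g1 ≠ 0) (hg2 : g2 ≠ 0)
    (hg3 : g3 ≠ 0) (hg4 : g4 ≠ 0) (hu : u ≠ 0) :
    (-(2*u)) * (p/(sA * (u * g3))) * (p/(sB*g4)) /
      ((p/((-c*sA) * (w * g1))) * (p/((c*sB)*g2))) = (2*w)*g1*g2/(g3*g4) := by
  have hfac : (c-1)*(c+1) = 0 := by linear_combination hc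
  rcases mul_eq_zero.1 hfac with h | h
  · have hc1 : c = 1 := by linear_combination h
    subst hc1
    field_simp
  · have hc1 : c = -1 := by linear_combination h
    subst hc1
    field_simp

lemma F_symm (s : ℂ) (h1 : -(1/2:ℝ) ≤ s.re) (h2 : s.re < 0) (m : ℤ) :
    (((-m:ℤ):ℂ) + s) * Complex.Gamma ((((-m:ℤ):ℂ) + s)/2) * Complex.Gamma ((((-m:ℤ):ℂ) + 1 - s)/2) /
      (Complex.Gamma ((((-m:ℤ):ℂ) - s)/2) * Complex.Gamma ((((-m:ℤ):ℂ) + 1 + s)/2)) =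
    ((m:ℂ) + s) * Complex.Gamma (((m:ℂ) + s)/2) * Complex.Gamma (((m:ℂ) + 1 - s)/2) /
      (Complex.Gamma (((m:ℂ) - s)/2) * Complex.Gamma (((m:ℂ) + 1 + s)/2)) := by
  have hcast : ((-m:ℤ):ℂ) = -(m:ℂ) := by push_cast; ring
  rw [hcast]
  rw [show (-(m:ℂ) + s)/2 = (s - (m:ℂ))/2 by ring,
      show (-(m:ℂ) + 1 - s)/2 = (1 - s - (m:ℂ))/2 by ring,
      show (-(m:ℂ) - s)/2 = (-s - (m:ℂ))/2 by ring,
      show (-(m:ℂ) + 1 + s)/2 = (1 + s - (m:ℂ))/2 by ring]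
  have hpi : ((Real.pi:ℝ):ℂ) ≠ 0 := Complex.ofReal_ne_zero.2 Real.pi_ne_zero
  have hu : ((m:ℂ) - s)/2 ≠ 0 := by
    intro h
    apply s_ne_int s h1 h2 m
    have : (m:ℂ) - s = 0 := by linear_combination 2*h
    linear_combination -this
  have hw : ((m:ℂ) + s)/2 ≠ 0 := by
    intro h
    apply s_ne_int s h1 h2 (-m)
    push_cast
    have : (m:ℂ) + s = 0 := by linear_combination 2*h
    linear_combination this
  have hsA : Complex.sin ((Real.pi:ℂ) * ((s - (m:ℂ))/2)) ≠ 0 :=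
    sin_ne s h1 h2 (-m) _ (Or.inl (by push_cast; ring))
  have hsB : Complex.sin ((Real.pi:ℂ) * ((1 - s - (m:ℂ))/2)) ≠ 0 :=
    sin_ne s h1 h2 (1 - m) _ (Or.inr (by push_cast; ring))
  have hg1 : Complex.Gamma (((m:ℂ) + s)/2) ≠ 0 := Gamma_p_ne s h1 h2 m _ rfl
  have hg2 : Complex.Gamma (((m:ℂ) + 1 - s)/2) ≠ 0 :=
    Gamma_m_ne s h1 h2 (m+1) _ (by push_cast; ring)
  have hg3 : Complex.Gamma (((m:ℂ) - s)/2) ≠ 0 := Gamma_m_ne s h1 h2 m _ rfl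
  have hg4 : Complex.Gamma (((m:ℂ) + 1 + s)/2) ≠ 0 :=
    Gamma_p_ne s h1 h2 (m+1) _ (by push_cast; ring)
  have hsm : Complex.sin ((m:ℂ) * (Real.pi:ℂ)) = 0 := Complex.sin_int_mul_pi m
  have hc2 : (Complex.cos ((m:ℂ) * (Real.pi:ℂ)))^2 = 1 := by
    have := Complex.sin_sq_add_cos_sq ((m:ℂ) * (Real.pi:ℂ))
    rw [hsm] at this
    linear_combination this
  have hc0 : Complex.cos ((m:ℂ) * (Real.pi:ℂ)) ≠ 0 := by
    intro h
    rw [h] at hc2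
    norm_num at hc2
  -- sin relations
  have hsinC : Complex.sin ((Real.pi:ℂ) * ((-s - (m:ℂ))/2))
      = -(Complex.cos ((m:ℂ) * (Real.pi:ℂ))) * Complex.sin ((Real.pi:ℂ) * ((s - (m:ℂ))/2)) := by
    rw [show (Real.pi:ℂ) * ((-s - (m:ℂ))/2)
        = -((Real.pi:ℂ) * ((s - (m:ℂ))/2) + (m:ℂ) * (Real.pi:ℂ)) by ring]
    rw [Complex.sin_neg, Complex.sin_add, hsm]
    ring
  have hsinD : Complex.sin ((Real.pi:ℂ) * ((1 + s - (m:ℂ))/2))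
      = Complex.cos ((m:ℂ) * (Real.pi:ℂ)) * Complex.sin ((Real.pi:ℂ) * ((1 - s - (m:ℂ))/2)) := by
    rw [show (Real.pi:ℂ) * ((1 + s - (m:ℂ))/2)
        = ((Real.pi:ℂ) - (m:ℂ)*(Real.pi:ℂ)) - (Real.pi:ℂ) * ((1 - s - (m:ℂ))/2) by ring]
    rw [Complex.sin_sub, Complex.sin_pi_sub, Complex.cos_pi_sub, hsm]
    ring
  -- reflection identities
  have r1 := Complex.Gamma_mul_Gamma_one_sub ((s - (m:ℂ))/2)
  rw [show (1:ℂ) - (s - (m:ℂ))/2 = ((m:ℂ) - s)/2 + 1 by ring,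
      Complex.Gamma_add_one _ hu, eq_div_iff hsA] at r1
  have h1eq : Complex.Gamma ((s - (m:ℂ))/2)
      = ((Real.pi:ℝ):ℂ) / (Complex.sin ((Real.pi:ℂ) * ((s - (m:ℂ))/2)) *
        ((((m:ℂ) - s)/2) * Complex.Gamma (((m:ℂ) - s)/2))) := by
    rw [eq_div_iff (mul_ne_zero hsA (mul_ne_zero hu hg3))]
    linear_combination r1
  have r2 := Complex.Gamma_mul_Gamma_one_sub ((1 - s - (m:ℂ))/2)
  rw [show (1:ℂ) - (1 - s - (m:ℂ))/2 = ((m:ℂ) + 1 + s)/2 by ring, eq_div_iff hsB] at r2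
  have h2eq : Complex.Gamma ((1 - s - (m:ℂ))/2)
      = ((Real.pi:ℝ):ℂ) / (Complex.sin ((Real.pi:ℂ) * ((1 - s - (m:ℂ))/2)) *
        Complex.Gamma (((m:ℂ) + 1 + s)/2)) := by
    rw [eq_div_iff (mul_ne_zero hsB hg4)]
    linear_combination r2
  have r3 := Complex.Gamma_mul_Gamma_one_sub ((-s - (m:ℂ))/2)
  rw [show (1:ℂ) - (-s - (m:ℂ))/2 = ((m:ℂ) + s)/2 + 1 by ring,
      Complex.Gamma_add_one _ hw, hsinC,
      eq_div_iff (mul_ne_zero (neg_ne_zero.2 hc0) hsA)] at r3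
  have h3eq : Complex.Gamma ((-s - (m:ℂ))/2)
      = ((Real.pi:ℝ):ℂ) / ((-(Complex.cos ((m:ℂ)*(Real.pi:ℂ))) *
        Complex.sin ((Real.pi:ℂ)*((s-(m:ℂ))/2))) *
        ((((m:ℂ)+s)/2) * Complex.Gamma (((m:ℂ)+s)/2))) := by
    rw [eq_div_iff (mul_ne_zero (mul_ne_zero (neg_ne_zero.2 hc0) hsA) (mul_ne_zero hw hg1))]
    linear_combination r3
  have r4 := Complex.Gamma_mul_Gamma_one_sub ((1 + s - (m:ℂ))/2)
  rw [show (1:ℂ) - (1 + s - (m:ℂ))/2 = ((m:ℂ) + 1 - s)/2 by ring, hsinD,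
      eq_div_iff (mul_ne_zero hc0 hsB)] at r4
  have h4eq : Complex.Gamma ((1 + s - (m:ℂ))/2)
      = ((Real.pi:ℝ):ℂ) / ((Complex.cos ((m:ℂ)*(Real.pi:ℂ)) *
        Complex.sin ((Real.pi:ℂ)*((1-s-(m:ℂ))/2))) * Complex.Gamma (((m:ℂ)+1-s)/2)) := by
    rw [eq_div_iff (mul_ne_zero (mul_ne_zero hc0 hsB) hg2)]
    linear_combination r4
  rw [h1eq, h2eq, h3eq, h4eq]
  have haux := aux_sym (((m:ℂ) - s)/2) (((m:ℂ) + s)/2)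
    (Complex.Gamma (((m:ℂ)+s)/2)) (Complex.Gamma (((m:ℂ)+1-s)/2))
    (Complex.Gamma (((m:ℂ)-s)/2)) (Complex.Gamma (((m:ℂ)+1+s)/2))
    (Complex.sin ((Real.pi:ℂ) * ((s - (m:ℂ))/2)))
    (Complex.sin ((Real.pi:ℂ) * ((1 - s - (m:ℂ))/2)))
    (Complex.cos ((m:ℂ)*(Real.pi:ℂ))) ((Real.pi:ℝ):ℂ)
    hc2 hpi hsA hsB hg1 hg2 hg3 hg4 hu
  calc (-(m:ℂ) + s) * (((Real.pi:ℝ):ℂ) / (Complex.sin ((Real.pi:ℂ) * ((s - (m:ℂ))/2)) *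
        ((((m:ℂ) - s)/2) * Complex.Gamma (((m:ℂ) - s)/2)))) *
        (((Real.pi:ℝ):ℂ) / (Complex.sin ((Real.pi:ℂ) * ((1 - s - (m:ℂ))/2)) *
        Complex.Gamma (((m:ℂ) + 1 + s)/2))) /
        ((((Real.pi:ℝ):ℂ) / ((-(Complex.cos ((m:ℂ)*(Real.pi:ℂ))) *
        Complex.sin ((Real.pi:ℂ)*((s-(m:ℂ))/2))) *
        ((((m:ℂ)+s)/2) * Complex.Gamma (((m:ℂ)+s)/2)))) *
        (((Real.pi:ℝ):ℂ) / ((Complex.cos ((m:ℂ)*(Real.pi:ℂ)) *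
        Complex.sin ((Real.pi:ℂ)*((1-s-(m:ℂ))/2))) * Complex.Gamma (((m:ℂ)+1-s)/2))))
      = (-(2*(((m:ℂ) - s)/2))) * (((Real.pi:ℝ):ℂ)/(Complex.sin ((Real.pi:ℂ) * ((s - (m:ℂ))/2)) *
        ((((m:ℂ) - s)/2) * Complex.Gamma (((m:ℂ)-s)/2)))) *
        (((Real.pi:ℝ):ℂ)/(Complex.sin ((Real.pi:ℂ) * ((1 - s - (m:ℂ))/2)) *
        Complex.Gamma (((m:ℂ)+1+s)/2))) /
        ((((Real.pi:ℝ):ℂ)/((-(Complex.cos ((m:ℂ)*(Real.pi:ℂ))) *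
        Complex.sin ((Real.pi:ℂ) * ((s - (m:ℂ))/2))) *
        ((((m:ℂ) + s)/2) * Complex.Gamma (((m:ℂ)+s)/2)))) *
        (((Real.pi:ℝ):ℂ)/((Complex.cos ((m:ℂ)*(Real.pi:ℂ)) *
        Complex.sin ((Real.pi:ℂ) * ((1 - s - (m:ℂ))/2))) * Complex.Gamma (((m:ℂ)+1-s)/2)))) := by
        ring
    _ = (2*(((m:ℂ) + s)/2)) * Complex.Gamma (((m:ℂ)+s)/2) * Complex.Gamma (((m:ℂ)+1-s)/2) /
        (Complex.Gamma (((m:ℂ)-s)/2) * Complex.Gamma (((m:ℂ)+1+s)/2)) := haux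
    _ = ((m:ℂ) + s) * Complex.Gamma (((m:ℂ) + s)/2) * Complex.Gamma (((m:ℂ) + 1 - s)/2) /
        (Complex.Gamma (((m:ℂ) - s)/2) * Complex.Gamma (((m:ℂ) + 1 + s)/2)) := by ring


/-- Asymptotically, `r·Re(ω̃(k))/|k| → 1` as `|k| → ∞`: the sequence
`r·Re(ω̃(k))/k` tends to `1` as `k → +∞` through the positive integers, and the same
limit holds as `k → −∞` with `|k|` in the denominator. -/
theorem omega_asymptotics (r ζ : ℝ) (hr : 0 < r) (hζ : 0 < ζ)
    (ν : ℂ)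
    (hν : ν = if ζ < 1 / 2 then Complex.I * (Real.sqrt (1 / 4 - ζ ^ 2) : ℂ)
      else (Real.sqrt (ζ ^ 2 - 1 / 4) : ℂ))
    (s : ℂ) (hs : s = -(1 / 2) - Complex.I * ν)
    (ω : ℤ → ℂ)
    (hω : ∀ k : ℤ, ω k =
      (r : ℂ)⁻¹ * ((k : ℂ) + s) *
        Complex.Gamma (((k : ℂ) + s) / 2) * Complex.Gamma (((k : ℂ) + 1 - s) / 2) /
        (Complex.Gamma (((k : ℂ) - s) / 2) * Complex.Gamma (((k : ℂ) + 1 + s) / 2))) :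
    Filter.Tendsto (fun n : ℕ => r * (ω (n : ℤ)).re / (n : ℝ)) Filter.atTop (nhds 1) ∧
    Filter.Tendsto (fun k : ℤ => r * (ω k).re / ((|k| : ℤ) : ℝ)) Filter.atBot (nhds 1) := by
  -- real-part bounds for s
  have hsre : -(1/2:ℝ) ≤ s.re ∧ s.re < 0 := by
    rw [hs]
    by_cases hcase : ζ < 1/2
    · rw [hν, if_pos hcase]
      have h0 : (0:ℝ) ≤ Real.sqrt (1/4 - ζ^2) := Real.sqrt_nonneg _
      have hlt : Real.sqrt (1/4 - ζ^2) < 1/2 := by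
        have : 1/4 - ζ^2 < (1/2)^2 := by nlinarith
        calc Real.sqrt (1/4 - ζ^2) < Real.sqrt ((1/2)^2) := by
              apply Real.sqrt_lt_sqrt ?_ this
              nlinarith
          _ = 1/2 := by rw [Real.sqrt_sq]; norm_num
      simp [Complex.sub_re, Complex.mul_re, Complex.I_re, Complex.I_im,
        Complex.ofReal_re, Complex.ofReal_im]
      linarith [hlt]
    · rw [hν, if_neg hcase]
      simp [Complex.sub_re, Complex.mul_re, Complex.I_re, Complex.I_im,
        Complex.ofReal_re, Complex.ofReal_im]
  obtain ⟨hs1, hs2⟩ := hsre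
  have hrne : (r:ℂ) ≠ 0 := Complex.ofReal_ne_zero.2 (ne_of_gt hr)
  -- Part 1
  have hG := G_tendsto s hs1 hs2
  have hone : Filter.Tendsto (fun k:ℕ => 1 + s/(k:ℂ)) Filter.atTop (nhds 1) := by
    have hinv : Filter.Tendsto (fun k:ℕ => ((k:ℂ))⁻¹) Filter.atTop (nhds 0) := by
      have hre : Filter.Tendsto (fun k:ℕ => ((k:ℝ))⁻¹) Filter.atTop (nhds 0) :=
        tendsto_inv_atTop_nhds_zero_nat
      have h2 := (Complex.continuous_ofReal.tendsto 0).comp hre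
      simp only [Complex.ofReal_zero] at h2
      apply h2.congr
      intro k
      simp [Function.comp]
    have h0 : Filter.Tendsto (fun k:ℕ => s * ((k:ℂ))⁻¹) Filter.atTop (nhds 0) := by
      simpa using hinv.const_mul s
    have := h0.const_add (1:ℂ)
    simp only [add_zero] at this
    exact this.congr (fun k => by rw [div_eq_mul_inv])
  have hprod : Filter.Tendsto (fun k:ℕ => (1 + s/(k:ℂ)) *
      (Complex.Gamma (((k:ℂ)+s)/2) * Complex.Gamma (((k:ℂ)+1-s)/2) /
      (Complex.Gamma (((k:ℂ)-s)/2) * Complex.Gamma (((k:ℂ)+1+s)/2))))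
      Filter.atTop (nhds 1) := by
    have := hone.mul hG
    simpa using this
  have hCtend : Filter.Tendsto (fun k:ℕ => (r:ℂ) * ω (k:ℤ) / (k:ℂ)) Filter.atTop (nhds 1) := by
    apply hprod.congr'
    filter_upwards [Filter.eventually_ge_atTop 1] with k hk
    have hkne : ((k:ℕ):ℂ) ≠ 0 := Nat.cast_ne_zero.2 (by omega)
    rw [hω (k:ℤ)]
    have hc1 : (((k:ℤ)):ℂ) = ((k:ℕ):ℂ) := by push_cast; ring
    rw [hc1]
    have hg3 : Complex.Gamma ((((k:ℕ):ℂ)) - s) ≠ 0 → True := fun _ => trivial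
    have hG3 : Complex.Gamma (((((k:ℕ)):ℂ) - s)/2) ≠ 0 :=
      Gamma_m_ne s hs1 hs2 (k:ℤ) _ (by push_cast; ring)
    have hG4 : Complex.Gamma (((((k:ℕ)):ℂ) + 1 + s)/2) ≠ 0 :=
      Gamma_p_ne s hs1 hs2 ((k:ℤ)+1) _ (by push_cast; ring)
    field_simp
  have T1 : Filter.Tendsto (fun n : ℕ => r * (ω (n : ℤ)).re / (n : ℝ))
      Filter.atTop (nhds 1) := by
    have hre := (Complex.continuous_re.tendsto 1).comp hCtend
    simp only [Complex.one_re] at hre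
    apply hre.congr
    intro k
    simp only [Function.comp]
    by_cases hk : k = 0
    · subst hk; simp
    · have hkR : ((k:ℕ):ℝ) ≠ 0 := Nat.cast_ne_zero.2 hk
      have : (r:ℂ) * ω (k:ℤ) / ((k:ℕ):ℂ) = (((r/(k:ℝ)):ℝ):ℂ) * ω (k:ℤ) := by
        push_cast
        rw [mul_comm, mul_div_assoc, mul_comm]
      rw [this, Complex.re_ofReal_mul]
      field_simp
  refine ⟨T1, ?_⟩
  -- Part 2
  have hsym : ∀ m:ℤ, ω (-m) = ω m := by
    intro m
    rw [hω (-m), hω m]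
    calc (r:ℂ)⁻¹ * (((-m:ℤ):ℂ) + s) * Complex.Gamma ((((-m:ℤ):ℂ) + s)/2) *
          Complex.Gamma ((((-m:ℤ):ℂ) + 1 - s)/2) /
          (Complex.Gamma ((((-m:ℤ):ℂ) - s)/2) * Complex.Gamma ((((-m:ℤ):ℂ) + 1 + s)/2))
        = (r:ℂ)⁻¹ * ((((-m:ℤ):ℂ) + s) * Complex.Gamma ((((-m:ℤ):ℂ) + s)/2) *
          Complex.Gamma ((((-m:ℤ):ℂ) + 1 - s)/2) /
          (Complex.Gamma ((((-m:ℤ):ℂ) - s)/2) * Complex.Gamma ((((-m:ℤ):ℂ) + 1 + s)/2))) := by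
          ring
      _ = (r:ℂ)⁻¹ * (((m:ℂ) + s) * Complex.Gamma (((m:ℂ) + s)/2) *
          Complex.Gamma (((m:ℂ) + 1 - s)/2) /
          (Complex.Gamma (((m:ℂ) - s)/2) * Complex.Gamma (((m:ℂ) + 1 + s)/2))) := by
          rw [F_symm s hs1 hs2 m]
      _ = (r:ℂ)⁻¹ * ((m:ℂ) + s) * Complex.Gamma (((m:ℂ) + s)/2) *
          Complex.Gamma (((m:ℂ) + 1 - s)/2) /
          (Complex.Gamma (((m:ℂ) - s)/2) * Complex.Gamma (((m:ℂ) + 1 + s)/2)) := by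
          ring
  have hcomp : Filter.Tendsto (fun k:ℤ => (-k).toNat) Filter.atBot Filter.atTop := by
    rw [Filter.tendsto_atTop]
    intro b
    rw [Filter.eventually_atBot]
    exact ⟨-(b:ℤ), fun k hk => by omega⟩
  have := T1.comp hcomp
  apply this.congr'
  filter_upwards [Filter.eventually_le_atBot (-1:ℤ)] with k hk
  simp only [Function.comp]
  have h1k : (((-k).toNat : ℕ) : ℤ) = -k := Int.toNat_of_nonneg (by omega)
  have hωeq : ω ((((-k).toNat : ℕ)):ℤ) = ω k := by
    rw [h1k]
    have := hsym (-k)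
    rw [neg_neg] at this
    exact this.symm
  rw [hωeq]
  have habs : ((|k| : ℤ) : ℝ) = (((-k).toNat : ℕ) : ℝ) := by
    have : (|k| : ℤ) = (((-k).toNat : ℕ) : ℤ) := by
      rw [abs_of_nonpos (by omega : k ≤ 0)]
      omega
    rw [this]
    push_cast
    ring
  rw [habs]
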